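/- Define u : ℝ² → ℝ by u(x,y) = log((x²+y²)(1+x²+y²)) + (x²+y²). Then for every (x,y) ≠ (0,0), the Laplacian of u at (x,y) equals 4·(1 + 1/(1+x²+y²)²), i.e. ∂²u/∂x² + ∂²u/∂y² = 4(1 + (1+x²+y²)^{−2}). (By the Edelman–Kostlan formula, this computes the first intensity ρ₁(z) = (1/π)(1 + (1+|z|²)^{−2}) of the zeros of the derivative of the planar GAF, i.e. of the local extrema of the Bargmann transform of white noise.) -/

import Mathlib

open Real

/-- `u(x,y) = log((x²+y²)(1+x²+y²)) + (x²+y²)`. -/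
noncomputable def uEK (x y : ℝ) : ℝ :=
  Real.log ((x ^ 2 + y ^ 2) * (1 + x ^ 2 + y ^ 2)) + (x ^ 2 + y ^ 2)

lemma uEK_deriv1 (y x : ℝ) (hx : 0 < x ^ 2 + y ^ 2) :
    HasDerivAt (fun s : ℝ => uEK s y)
      (2 * x / (x ^ 2 + y ^ 2) + 2 * x / (1 + x ^ 2 + y ^ 2) + 2 * x) x := by
  have ha : HasDerivAt (fun s : ℝ => s ^ 2 + y ^ 2) (2 * x) x := by
    simpa using (hasDerivAt_pow 2 x).add_const (y ^ 2)
  have hb : HasDerivAt (fun s : ℝ => 1 + s ^ 2 + y ^ 2) (2 * x) x := by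
    simpa [add_assoc] using ha.const_add 1
  have hbpos : 0 < 1 + x ^ 2 + y ^ 2 := by nlinarith
  have hf := ha.mul hb
  have hfne : (x ^ 2 + y ^ 2) * (1 + x ^ 2 + y ^ 2) ≠ 0 :=
    ne_of_gt (mul_pos hx hbpos)
  have hlog := hf.log hfne
  have := hlog.add ha
  convert this using 1
  · rfl
  · rfl
  · rfl
  change _ = (2 * x * (1 + x ^ 2 + y ^ 2) + (x ^ 2 + y ^ 2) * (2 * x)) /
    ((x ^ 2 + y ^ 2) * (1 + x ^ 2 + y ^ 2)) + 2 * x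
  field_simp

lemma uEK_lapx (y x : ℝ) (hx : 0 < x ^ 2 + y ^ 2) :
    deriv (deriv (fun s : ℝ => uEK s y)) x =
      (2 * y ^ 2 - 2 * x ^ 2) / (x ^ 2 + y ^ 2) ^ 2 +
        (2 + 2 * y ^ 2 - 2 * x ^ 2) / (1 + x ^ 2 + y ^ 2) ^ 2 + 2 := by
  set g : ℝ → ℝ := fun s => 2 * s / (s ^ 2 + y ^ 2) + 2 * s / (1 + s ^ 2 + y ^ 2) + 2 * s with hg
  have hev : ∀ᶠ s in nhds x, 0 < s ^ 2 + y ^ 2 := by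
    have hc : ContinuousAt (fun s : ℝ => s ^ 2 + y ^ 2) x := by fun_prop
    exact hc.eventually (eventually_gt_nhds hx)
  have hEq : deriv (fun s : ℝ => uEK s y) =ᶠ[nhds x] g :=
    hev.mono fun s hs => (uEK_deriv1 y s hs).deriv
  rw [hEq.deriv_eq]
  have ha : HasDerivAt (fun s : ℝ => s ^ 2 + y ^ 2) (2 * x) x := by
    simpa using (hasDerivAt_pow 2 x).add_const (y ^ 2)
  have hb : HasDerivAt (fun s : ℝ => 1 + s ^ 2 + y ^ 2) (2 * x) x := by
    simpa [add_assoc] using ha.const_add 1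
  have hbpos : 0 < 1 + x ^ 2 + y ^ 2 := by nlinarith
  have hn : HasDerivAt (fun s : ℝ => 2 * s) 2 x := by
    simpa using (hasDerivAt_id x).const_mul 2
  have h1 := hn.div ha (ne_of_gt hx)
  have h2 := hn.div hb (ne_of_gt hbpos)
  have hG := (h1.add h2).add hn
  have : deriv g x = _ := hG.deriv
  rw [this]
  have h1e : (x ^ 2 + y ^ 2) ≠ 0 := ne_of_gt hx
  have h2e : (1 + x ^ 2 + y ^ 2) ≠ 0 := ne_of_gt hbpos
  field_simp
  ring

lemma uEK_symm (x t : ℝ) : uEK x t = uEK t x := by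
  unfold uEK
  ring_nf

/-- Away from the origin, the Laplacian of `u(x,y) = log((x²+y²)(1+x²+y²)) + (x²+y²)` equals
`4(1 + (1+x²+y²)^{−2})`. By the Edelman–Kostlan formula this computes the first intensity
`ρ₁(z) = (1/π)(1 + (1+|z|²)^{−2})` of the zeros of the derivative of the planar GAF, i.e. of
the local extrema of the Bargmann transform of white noise. -/
theorem laplacian_uEK (x y : ℝ) (h : (x, y) ≠ (0, 0)) :
    deriv (deriv (fun s : ℝ => uEK s y)) x + deriv (deriv (fun t : ℝ => uEK x t)) y =
      4 * (1 + 1 / (1 + x ^ 2 + y ^ 2) ^ 2) := by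
  have hx : 0 < x ^ 2 + y ^ 2 := by
    have : x ≠ 0 ∨ y ≠ 0 := by
      by_contra hc
      push_neg at hc
      exact h (by simp [hc.1, hc.2])
    rcases this with h0 | h0 <;> positivity
  have hy : 0 < y ^ 2 + x ^ 2 := by linarith
  have hswap : (fun t : ℝ => uEK x t) = fun t : ℝ => uEK t x := by
    funext t; exact uEK_symm x t
  rw [hswap, uEK_lapx y x hx, uEK_lapx x y hy]
  have h1e : (x ^ 2 + y ^ 2) ≠ 0 := ne_of_gt hx
  have hbpos : 0 < 1 + x ^ 2 + y ^ 2 := by nlinarith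
  have h2e : (1 + x ^ 2 + y ^ 2) ≠ 0 := ne_of_gt hbpos
  have hxy : (1 + y ^ 2 + x ^ 2) = (1 + x ^ 2 + y ^ 2) := by ring
  rw [hxy]
  field_simp
  ring
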